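/- Let (Y,d) be a Baire metric space and Φ = (φ_n) a sequence of continuous bounded real-valued functions on Y with limsup_n ‖φ_n‖_∞ < ∞. If Y is Φ-chaotic, then the irregular set I(Φ) = {y ∈ Y : lim_n φ_n(y) does not exist} is Baire generic in Y. -/

import Mathlib

open Filter Topology MeasureTheory Metric Set TopologicalSpace

section Defs

variable {X : Type*} [TopologicalSpace X]

/-- The `n`-th Birkhoff average of `φ` along the orbit of `x` under `T`. -/
noncomputable def birkhoffAvg (T : X → X) (φ : X → ℝ) (x : X) (n : ℕ) : ℝ :=
  (∑ j ∈ Finset.range n, φ (T^[j] x)) / n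

/-- The set of `(T,φ)`-irregular points. -/
def irregularSet (T : X → X) (φ : X → ℝ) : Set X :=
  {x | ¬ ∃ l : ℝ, Tendsto (fun n => birkhoffAvg T φ x n) atTop (𝓝 l)}

/-- The set of completely irregular points of `T`. -/
def completelyIrregular (T : X → X) : Set X :=
  {x | ∀ φ : X → ℝ, Continuous φ → (irregularSet T φ).Nonempty → x ∈ irregularSet T φ}

/-- The omega-limit set of `x` under `T`. -/
def omegaLimitSet (T : X → X) (x : X) : Set X :=
  ⋂ N : ℕ, closure ((fun n => T^[n] x) '' Set.Ici N)

/-- The closure of the forward orbit of `x` under `T`. -/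
def orbitClosure (T : X → X) (x : X) : Set X :=
  closure (Set.range fun n : ℕ => T^[n] x)

/-- Topological transitivity. -/
def TopTransitive (T : X → X) : Prop :=
  ∀ U V : Set X, IsOpen U → IsOpen V → U.Nonempty → V.Nonempty →
    ∃ n : ℕ, (U ∩ T^[n] ⁻¹' V).Nonempty

/-- The set of non-wandering points of `T`. -/
def nonWandering (T : X → X) : Set X :=
  {z | ∀ U : Set X, IsOpen U → z ∈ U → ∃ N : ℕ, 1 ≤ N ∧ (T^[N] '' U ∩ U).Nonempty}

/-- The space `X` has no isolated points. -/
def NoIsolatedPoints (X : Type*) [TopologicalSpace X] : Prop :=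
  ∀ x : X, (𝓝[≠] x).NeBot

end Defs

/-- The shadowing property. -/
def ShadowingProperty {X : Type*} [MetricSpace X] (T : X → X) : Prop :=
  ∀ ε > 0, ∃ δ > 0, ∀ u : ℕ → X, (∀ n, dist (T (u n)) (u (n + 1)) < δ) →
    ∃ y : X, ∀ n, dist (T^[n] y) (u n) < ε

section MeasureDefs

variable {X : Type*} [TopologicalSpace X] [MeasurableSpace X]

/-- `μ` is a `T`-invariant Borel probability measure. -/
def InvariantProb (T : X → X) (μ : ProbabilityMeasure X) : Prop :=
  (μ : Measure X).map T = (μ : Measure X)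

/-- The (topological) support of a probability measure. -/
def msupp (μ : ProbabilityMeasure X) : Set X :=
  {x | ∀ U : Set X, x ∈ U → IsOpen U → 0 < (μ : Measure X) U}

/-- `μ ∈ V_T(x)`: `μ` is a weak* accumulation point of the empirical measures
along the orbit of `x`, characterized through convergence of Birkhoff averages of
every continuous function along a subsequence. -/
def memVT (T : X → X) (x : X) (μ : ProbabilityMeasure X) : Prop :=
  ∃ n : ℕ → ℕ, StrictMono n ∧ ∀ φ : X → ℝ, Continuous φ →
    Tendsto (fun k => birkhoffAvg T φ x (n k)) atTop (𝓝 (∫ y, φ y ∂(μ : Measure X)))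

/-- The measure center of `T`. -/
def measureCenter (T : X → X) : Set X :=
  closure (⋃ μ ∈ {μ : ProbabilityMeasure X | InvariantProb T μ}, msupp μ)

/-- The basin of attraction of an invariant probability measure. -/
def basin (T : X → X) (η : ProbabilityMeasure X) : Set X :=
  {x | ∀ ψ : X → ℝ, Continuous ψ →
    Tendsto (fun n => birkhoffAvg T ψ x n) atTop (𝓝 (∫ y, ψ y ∂(η : Measure X)))}

end MeasureDefs


/-- The set of accumulation points of a real sequence. -/
def accPoints (u : ℕ → ℝ) : Set ℝ := {r | MapClusterPt r atTop u}

/-- `Y` is `Φ`-chaotic. -/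
def PhiChaotic {Y : Type*} [MetricSpace Y] (φ : ℕ → Y → ℝ) : Prop :=
  ∃ (Fam : Set (Set Y)) (ε : ℝ), 0 < ε ∧ ∀ U : Set Y, IsOpen U → U.Nonempty →
    ∃ a ∈ (⋃₀ Fam) ∩ U, ∃ b ∈ (⋃₀ Fam) ∩ U,
      ε < Metric.diam (accPoints (fun n => φ n a) ∪ accPoints (fun n => φ n b))

theorem stmt13 {Y : Type*} [MetricSpace Y] [BaireSpace Y] (φ : ℕ → Y → ℝ)
    (hcont : ∀ n, Continuous (φ n)) (hbd : ∀ n, ∃ C : ℝ, ∀ y, |φ n y| ≤ C)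
    (hlimsup : ∃ C : ℝ, ∀ᶠ n in atTop, ∀ y, |φ n y| ≤ C)
    (hchaos : PhiChaotic φ) :
    {y : Y | ¬ ∃ l : ℝ, Tendsto (fun n => φ n y) atTop (𝓝 l)} ∈ residual Y := by
  obtain ⟨Fam, ε, hε, hch⟩ := hchaos
  set F : ℕ → Set Y := fun N => {y | ∀ j ≥ N, ∀ k ≥ N, |φ j y - φ k y| ≤ ε / 4} with hF
  -- each F N is closed
  have hclosed : ∀ N, IsClosed (F N) := by
    intro N
    have : F N = ⋂ (j : ℕ) (_ : j ≥ N) (k : ℕ) (_ : k ≥ N),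
        {y | |φ j y - φ k y| ≤ ε / 4} := by
      ext y; simp [hF, Set.mem_setOf_eq]
    rw [this]
    exact isClosed_iInter fun j => isClosed_iInter fun _ => isClosed_iInter fun k =>
      isClosed_iInter fun _ =>
        isClosed_le (((hcont j).sub (hcont k)).abs) continuous_const
  -- accumulation points of sequences of points in F N are within ε/4 of φ N y
  have hacc : ∀ N y, y ∈ F N → ∀ r ∈ accPoints (fun n => φ n y), |r - φ N y| ≤ ε / 4 := by
    intro N y hy r hr
    refine le_of_forall_pos_le_add fun δ hδ => ?_
    have hfreq := (mapClusterPt_iff_frequently.mp hr) (Metric.ball r δ) (Metric.ball_mem_nhds r hδ)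
    obtain ⟨n, hn1, hn2⟩ := (hfreq.and_eventually (eventually_ge_atTop N)).exists
    have hyn := hy n hn2 N le_rfl
    have h1 : |r - φ n y| < δ := by
      have := hn1
      rw [Metric.mem_ball, Real.dist_eq, abs_sub_comm] at this
      exact this
    calc |r - φ N y| ≤ |r - φ n y| + |φ n y - φ N y| := abs_sub_le _ _ _
      _ ≤ ε / 4 + δ := by linarith
  -- each F N has dense complement
  have hdense : ∀ N, Dense (F N)ᶜ := by
    intro N
    rw [← interior_eq_empty_iff_dense_compl]
    by_contra h
    obtain ⟨x, hx⟩ := Set.nonempty_iff_ne_empty.mpr h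
    set V : Set Y := interior (F N) ∩ (φ N) ⁻¹' (Metric.ball (φ N x) (ε / 8)) with hV
    have hVopen : IsOpen V := isOpen_interior.inter ((hcont N).isOpen_preimage _ Metric.isOpen_ball)
    have hVne : V.Nonempty :=
      ⟨x, hx, by simp [Metric.mem_ball, hε]⟩
    obtain ⟨a, ⟨-, haV⟩, b, ⟨-, hbV⟩, hdiam⟩ := hch V hVopen hVne
    -- both acc sets lie in a small interval
    have key : ∀ c ∈ V, accPoints (fun n => φ n c) ⊆
        Set.Icc (φ N x - 3 * ε / 8) (φ N x + 3 * ε / 8) := by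
      intro c ⟨hc1, hc2⟩ r hr
      have hcF : c ∈ F N := interior_subset hc1
      have h1 : |r - φ N c| ≤ ε / 4 := hacc N c hcF r hr
      have h2 : |φ N c - φ N x| < ε / 8 := by
        rw [Set.mem_preimage, Metric.mem_ball, Real.dist_eq] at hc2
        exact hc2
      have : |r - φ N x| ≤ 3 * ε / 8 := by
        calc |r - φ N x| ≤ |r - φ N c| + |φ N c - φ N x| := abs_sub_le _ _ _
          _ ≤ 3 * ε / 8 := by linarith
      rw [abs_sub_le_iff] at this
      constructor <;> linarith [this.1, this.2]
    have hsub : accPoints (fun n => φ n a) ∪ accPoints (fun n => φ n b) ⊆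
        Set.Icc (φ N x - 3 * ε / 8) (φ N x + 3 * ε / 8) :=
      Set.union_subset (key a haV) (key b hbV)
    have hbdd : Bornology.IsBounded (Set.Icc (φ N x - 3 * ε / 8) (φ N x + 3 * ε / 8)) :=
      Metric.isBounded_Icc _ _
    have hle : Metric.diam (accPoints (fun n => φ n a) ∪ accPoints (fun n => φ n b)) ≤
        Metric.diam (Set.Icc (φ N x - 3 * ε / 8) (φ N x + 3 * ε / 8)) :=
      Metric.diam_mono hsub hbdd
    rw [Real.diam_Icc (by linarith)] at hle
    have : (φ N x + 3 * ε / 8) - (φ N x - 3 * ε / 8) = 3 * ε / 4 := by ring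
    rw [this] at hle
    linarith
  -- the countable intersection of complements is residual
  have hmem : (⋂ N, (F N)ᶜ) ∈ residual Y :=
    countable_iInter_mem.mpr fun N =>
      residual_of_dense_open (hclosed N).isOpen_compl (hdense N)
  refine Filter.mem_of_superset hmem ?_
  intro y hy
  simp only [Set.mem_iInter, Set.mem_compl_iff] at hy
  intro ⟨l, hl⟩
  obtain ⟨N, hN⟩ := Metric.tendsto_atTop.mp hl (ε / 8) (by linarith)
  refine hy N fun j hj k hk => ?_
  have h1 : |φ j y - l| < ε / 8 := by rw [← Real.dist_eq]; exact hN j hj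
  have h2 : |φ k y - l| < ε / 8 := by rw [← Real.dist_eq]; exact hN k hk
  calc |φ j y - φ k y| ≤ |φ j y - l| + |l - φ k y| := abs_sub_le _ _ _
    _ ≤ ε / 4 := by rw [abs_sub_comm l]; linarith
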